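/- arXiv:2010.00371 — 7 statements merged into one kernel-verified Lean document; each statement's English description precedes it below -/
import Mathlib

section
/- Let X = (x_1 ≥ … ≥ x_N) and Y = (y_1 ≥ … ≥ y_M) be 0-dimensional persistence diagrams with N < M. If max_{1 ≤ i ≤ N} |x_i − y_i| ≤ y_{N+1}/2, then d_B(X,Y) = y_{N+1}/2. -/
open Classical in
/-- Penalty of each point of the two diagrams under a partial matching `f`:
a point `x i` matched to `y j` incurs `|x i - y j|`; an unmatched `x i`
(matched to the diagonal) incurs `x i / 2`; an unmatched `y j` incurs `y j / 2`
(a `y j` in the range of `f` is already accounted for, so it incurs `0`). -/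
noncomputable def diagPenalty {N M : ℕ} (x : Fin N → ℝ) (y : Fin M → ℝ)
    (f : Fin N → Option (Fin M)) : Fin N ⊕ Fin M → ℝ
  | Sum.inl i => (f i).elim (x i / 2) (fun j => |x i - y j|)
  | Sum.inr j => if ∃ i, f i = some j then 0 else y j / 2

/-- The cost of a partial matching: the maximum of `|x i - y j|` over matched
pairs, of `x i / 2` over unmatched `i`, and of `y j / 2` over unmatched `j`. -/
noncomputable def matchCost {N M : ℕ} (x : Fin N → ℝ) (y : Fin M → ℝ)
    (f : Fin N → Option (Fin M)) : ℝ :=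
  ⨆ k, diagPenalty x y f k

/-- `f : Fin N → Option (Fin M)` is a partial matching when it is injective on
matched indices, i.e. it induces a bijection between a subset of `Fin N` and a
subset of `Fin M`. -/
def IsPartialMatching {N M : ℕ} (f : Fin N → Option (Fin M)) : Prop :=
  ∀ i i' j, f i = some j → f i' = some j → i = i'

/-- The bottleneck distance between two 0-dimensional persistence diagrams,
given by their (decreasing) sequences of death times: the minimum cost over
all partial matchings. -/
noncomputable def bottleneck {N M : ℕ} (x : Fin N → ℝ) (y : Fin M → ℝ) : ℝ :=
  ⨅ f : {f : Fin N → Option (Fin M) // IsPartialMatching f}, matchCost x y f.1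


open Classical in
lemma diagPenalty_nonneg' {N M : ℕ} (x : Fin N → ℝ) (y : Fin M → ℝ)
    (hxpos : ∀ i, 0 < x i) (hypos : ∀ j, 0 < y j)
    (f : Fin N → Option (Fin M)) (k : Fin N ⊕ Fin M) : 0 ≤ diagPenalty x y f k := by
  cases k with
  | inl i =>
    simp only [diagPenalty]
    cases hfi : f i with
    | none => exact (half_pos (hxpos i)).le
    | some j => exact abs_nonneg _
  | inr j =>
    simp only [diagPenalty]
    split_ifs
    · exact le_refl 0
    · linarith [hypos j]

open Classical in
lemma cost_lower' {N M : ℕ} (hNM : N < M) (x : Fin N → ℝ) (y : Fin M → ℝ)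
    (hy : Antitone y) (f : Fin N → Option (Fin M)) (hf : IsPartialMatching f) :
    y ⟨N, hNM⟩ / 2 ≤ matchCost x y f := by
  obtain ⟨j0, hj0le, hj0⟩ : ∃ j0 : Fin M, (j0 : ℕ) ≤ N ∧ ¬ ∃ i, f i = some j0 := by
    by_contra hcon
    push_neg at hcon
    choose g hg using fun j : Fin (N+1) =>
      hcon (Fin.castLE hNM j) (by simpa using Nat.lt_succ_iff.mp j.isLt)
    have hginj : Function.Injective g := by
      intro a b hab
      have h1 := hg a
      have h2 := hg b
      rw [hab, h2] at h1
      exact Fin.castLE_injective _ (Option.some_injective _ h1.symm)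
    have := Fintype.card_le_of_injective g hginj
    simp at this
  haveI : Nonempty (Fin N ⊕ Fin M) := ⟨Sum.inr j0⟩
  have hle : y ⟨N, hNM⟩ / 2 ≤ diagPenalty x y f (Sum.inr j0) := by
    simp only [diagPenalty, if_neg hj0]
    have : y ⟨N, hNM⟩ ≤ y j0 := hy (by simp [Fin.le_def]; exact hj0le)
    linarith
  exact hle.trans (le_ciSup (Finite.bddAbove_range _) _)

/-- If `N < M` and every rank-matched difference `|x i - y i|`
is at most `y (N+1) / 2`, then the bottleneck distance equals `y (N+1) / 2`. -/
theorem lumawig_lemma1 {N M : ℕ} (hNM : N < M)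
    (x : Fin N → ℝ) (y : Fin M → ℝ)
    (hx : Antitone x) (hy : Antitone y)
    (hxpos : ∀ i, 0 < x i) (hypos : ∀ j, 0 < y j)
    (h : ∀ i : Fin N, |x i - y (Fin.castLE hNM.le i)| ≤ y ⟨N, hNM⟩ / 2) :
    bottleneck x y = y ⟨N, hNM⟩ / 2 := by
  haveI : Nonempty (Fin N ⊕ Fin M) := ⟨Sum.inr ⟨N, hNM⟩⟩
  haveI : Nonempty {f : Fin N → Option (Fin M) // IsPartialMatching f} :=
    ⟨⟨fun _ => none, fun i i' j hi _ => by simp at hi⟩⟩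
  refine le_antisymm ?_ (le_ciInf fun f => cost_lower' hNM x y hy f.1 f.2)
  have hpm : IsPartialMatching (fun i => some (Fin.castLE hNM.le i) : Fin N → Option (Fin M)) := by
    intro i i' j hi hi'
    simp only [Option.some.injEq] at hi hi'
    exact Fin.castLE_injective _ (hi.trans hi'.symm)
  refine ciInf_le_of_le ?_ ⟨_, hpm⟩ ?_
  · refine ⟨0, ?_⟩
    rintro r ⟨f, rfl⟩
    exact (diagPenalty_nonneg' x y hxpos hypos f.1 (Sum.inr ⟨N, hNM⟩)).trans
      (le_ciSup (Finite.bddAbove_range _) _)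
  · apply ciSup_le
    rintro (i | j)
    · simpa [diagPenalty] using h i
    · simp only [diagPenalty]
      split_ifs with hcase
      · linarith [hypos ⟨N, hNM⟩]
      · have hjN : N ≤ (j : ℕ) := by
          by_contra hlt
          exact hcase ⟨⟨(j : ℕ), by omega⟩, by simp [Fin.ext_iff]⟩
        have : y j ≤ y ⟨N, hNM⟩ := hy (by simp [Fin.le_def]; exact hjN)
        linarith
end

section
/- Let X = (x_1 ≥ … ≥ x_N) and Y = (y_1 ≥ … ≥ y_N) be 0-dimensional persistence diagrams with the same number of points. If max(Z) ≤ max(x_l, y_l)/2, then d_B(X,Y) = max(Z). -/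
lemma key_lower {N : ℕ} (x y : Fin N → ℝ) (hx : Antitone x) (hy : Antitone y)
    (l : Fin N)
    (hm2 : |x l - y l| ≤ max (x l) (y l) / 2)
    (f : Fin N → Option (Fin N)) (hf : IsPartialMatching f) :
    |x l - y l| ≤ matchCost x y f := by
  by_contra hc
  push_neg at hc
  set m := |x l - y l| with hmdef
  have hbd : BddAbove (Set.range (diagPenalty x y f)) := (Set.finite_range _).bddAbove
  have hpen : ∀ k, diagPenalty x y f k < m := fun k =>
    lt_of_le_of_lt (le_ciSup hbd k) hc
  rcases le_total (y l) (x l) with hyx | hyx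
  · -- case x l ≥ y l
    have hm : m = x l - y l := abs_of_nonneg (by linarith)
    have hm2' : m ≤ x l / 2 := by rw [max_eq_left hyx] at hm2; exact hm2
    have step : ∀ i : Fin N, i ≤ l → ∃ j : Fin N, f i = some j ∧ (j : ℕ) < (l : ℕ) := by
      intro i hi
      have hxi : x l ≤ x i := hx hi
      cases hfi : f i with
      | none =>
        exfalso
        have hp := hpen (Sum.inl i)
        rw [show diagPenalty x y f (Sum.inl i) = (f i).elim (x i / 2) (fun j => |x i - y j|) from rfl, hfi] at hp
        simp only [Option.elim] at hp
        linarith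
      | some j =>
        refine ⟨j, rfl, ?_⟩
        have hp := hpen (Sum.inl i)
        rw [show diagPenalty x y f (Sum.inl i) = (f i).elim (x i / 2) (fun j => |x i - y j|) from rfl, hfi] at hp
        simp only [Option.elim] at hp
        by_contra hjl
        push_neg at hjl
        have h1 : y j ≤ y l := hy (by exact hjl)
        have h3 : x i - y j ≤ |x i - y j| := le_abs_self _
        linarith
    choose g hg1 hg2 using step
    have hlt : ∀ k : Fin ((l : ℕ) + 1), (k : ℕ) < N :=
      fun k => lt_of_le_of_lt (Nat.le_of_lt_succ k.isLt) l.isLt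
    have hle : ∀ k : Fin ((l : ℕ) + 1), (⟨(k : ℕ), hlt k⟩ : Fin N) ≤ l :=
      fun k => by simpa [Fin.le_def] using Nat.le_of_lt_succ k.isLt
    have hinj : Function.Injective
        (fun k : Fin ((l : ℕ) + 1) =>
          (⟨(g ⟨(k : ℕ), hlt k⟩ (hle k) : ℕ), hg2 _ _⟩ : Fin (l : ℕ))) := by
      intro k k' hkk'
      simp only [Fin.mk.injEq] at hkk'
      have heq : g ⟨(k : ℕ), hlt k⟩ (hle k) = g ⟨(k' : ℕ), hlt k'⟩ (hle k') := Fin.ext hkk'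
      have h1 := hg1 ⟨(k : ℕ), hlt k⟩ (hle k)
      have h2 := hg1 ⟨(k' : ℕ), hlt k'⟩ (hle k')
      rw [← heq] at h2
      have := hf _ _ _ h1 h2
      exact Fin.ext (by simpa using congrArg Fin.val this)
    have := Fintype.card_le_of_injective _ hinj
    simp at this
  · -- case y l ≥ x l
    have hm : m = y l - x l := by rw [hmdef, abs_sub_comm]; exact abs_of_nonneg (by linarith)
    have hm2' : m ≤ y l / 2 := by rw [max_eq_right hyx] at hm2; exact hm2
    have step : ∀ j : Fin N, j ≤ l → ∃ i : Fin N, f i = some j ∧ (i : ℕ) < (l : ℕ) := by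
      intro j hj
      have hyj : y l ≤ y j := hy hj
      by_cases hex : ∃ i, f i = some j
      · obtain ⟨i, hi⟩ := hex
        refine ⟨i, hi, ?_⟩
        have hp := hpen (Sum.inl i)
        rw [show diagPenalty x y f (Sum.inl i) = (f i).elim (x i / 2) (fun j => |x i - y j|) from rfl, hi] at hp
        simp only [Option.elim] at hp
        by_contra hil
        push_neg at hil
        have h1 : x i ≤ x l := hx (by exact hil)
        have h3 : y j - x i ≤ |x i - y j| := by rw [abs_sub_comm]; exact le_abs_self _
        linarith
      · exfalso
        have hp := hpen (Sum.inr j)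
        rw [show diagPenalty x y f (Sum.inr j) = if ∃ i, f i = some j then 0 else y j / 2 from rfl,
          if_neg hex] at hp
        linarith
    choose g hg1 hg2 using step
    have hlt : ∀ k : Fin ((l : ℕ) + 1), (k : ℕ) < N :=
      fun k => lt_of_le_of_lt (Nat.le_of_lt_succ k.isLt) l.isLt
    have hle : ∀ k : Fin ((l : ℕ) + 1), (⟨(k : ℕ), hlt k⟩ : Fin N) ≤ l :=
      fun k => by simpa [Fin.le_def] using Nat.le_of_lt_succ k.isLt
    have hinj : Function.Injective
        (fun k : Fin ((l : ℕ) + 1) =>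
          (⟨(g ⟨(k : ℕ), hlt k⟩ (hle k) : ℕ), hg2 _ _⟩ : Fin (l : ℕ))) := by
      intro k k' hkk'
      simp only [Fin.mk.injEq] at hkk'
      have heq : g ⟨(k : ℕ), hlt k⟩ (hle k) = g ⟨(k' : ℕ), hlt k'⟩ (hle k') := Fin.ext hkk'
      have h1 := hg1 ⟨(k : ℕ), hlt k⟩ (hle k)
      have h2 := hg1 ⟨(k' : ℕ), hlt k'⟩ (hle k')
      rw [heq, h2] at h1
      have := Option.some.inj h1
      exact (Fin.ext (by simpa using congrArg Fin.val this) : k' = k).symm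
    have := Fintype.card_le_of_injective _ hinj
    simp at this

/-- (Lemma 2, case 1.) For diagrams with the same number of
points, if `max Z ≤ max (x l) (y l) / 2` (where `l` is the least index
achieving `max Z`), then `d_B(X,Y) = max Z`. -/
theorem lumawig_lemma2_case1 {N : ℕ} (hN : 1 ≤ N)
    (x y : Fin N → ℝ)
    (hx : Antitone x) (hy : Antitone y)
    (hxpos : ∀ i, 0 < x i) (hypos : ∀ i, 0 < y i)
    (l : Fin N)
    (hl : |x l - y l| = ⨆ i, |x i - y i|)
    (hlleast : ∀ i, |x i - y i| = (⨆ j, |x j - y j|) → l ≤ i)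
    (h : (⨆ i, |x i - y i|) ≤ max (x l) (y l) / 2) :
    bottleneck x y = ⨆ i, |x i - y i| := by
  haveI : Nonempty (Fin N) := ⟨⟨0, hN⟩⟩
  have hbdz : BddAbove (Set.range fun i => |x i - y i|) := (Set.finite_range _).bddAbove
  have hpen_nonneg : ∀ (f : Fin N → Option (Fin N)) (k : Fin N ⊕ Fin N),
      0 ≤ diagPenalty x y f k := by
    intro f k
    rcases k with i | j
    · rcases hfi : f i with _ | j
      · simp only [diagPenalty, hfi, Option.elim]
        have := (hxpos i).le; linarith
      · simp [diagPenalty, hfi, abs_nonneg]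
    · by_cases hex : ∃ i, f i = some j
      · simp [diagPenalty, hex]
      · simp [diagPenalty, hex]
        have := (hypos j).le; linarith
  have hcost_nonneg : ∀ (f : Fin N → Option (Fin N)), 0 ≤ matchCost x y f := by
    intro f
    exact le_trans (hpen_nonneg f (Sum.inl ⟨0, hN⟩))
      (le_ciSup (Set.finite_range _).bddAbove (Sum.inl ⟨0, hN⟩ : Fin N ⊕ Fin N))
  have hid : IsPartialMatching (fun i : Fin N => some i) := by
    intro i i' j h1 h2
    rw [Option.some.inj h1, Option.some.inj h2]
  haveI : Nonempty {f : Fin N → Option (Fin N) // IsPartialMatching f} := ⟨⟨_, hid⟩⟩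
  apply le_antisymm
  · -- bottleneck ≤ sup
    have hcost : matchCost x y (fun i => some i) ≤ ⨆ i, |x i - y i| := by
      apply ciSup_le
      rintro (i | j)
      · simpa [diagPenalty] using le_ciSup hbdz i
      · have hex : ∃ i : Fin N, (some i : Option (Fin N)) = some j := ⟨j, rfl⟩
        simp only [diagPenalty, if_pos hex]
        exact le_trans (abs_nonneg _) (le_ciSup hbdz l)
    have hbb : BddBelow (Set.range fun f : {f : Fin N → Option (Fin N) // IsPartialMatching f} => matchCost x y f.1) := by
      refine ⟨0, ?_⟩
      rintro r ⟨f, rfl⟩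
      exact hcost_nonneg f.1
    exact le_trans (ciInf_le hbb ⟨_, hid⟩) hcost
  · rw [← hl]
    refine le_ciInf ?_
    rintro ⟨f, hf⟩
    exact key_lower x y hx hy l (hl ▸ h) f hf
end

section
/- Let X = (x_1 ≥ … ≥ x_N) and Y = (y_1 ≥ … ≥ y_N) be 0-dimensional persistence diagrams with the same number N ≥ 2 of points. If ζ < max(x_l, y_l)/2 < max(Z), then d_B(X,Y) = max(x_l, y_l)/2. -/
/-- (Lemma 2, case 2.) For diagrams with the same number
`N ≥ 2` of points, if `ζ < max (x l) (y l) / 2 < max Z` (where `l` is the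
least index achieving `max Z` and `ζ` is the second largest entry of `Z`),
then `d_B(X,Y) = max (x l) (y l) / 2`. -/
theorem lumawig_lemma2_case2 {N : ℕ} (hN : 2 ≤ N)
    (x y : Fin N → ℝ)
    (hx : Antitone x) (hy : Antitone y)
    (hxpos : ∀ i, 0 < x i) (hypos : ∀ i, 0 < y i)
    (l : Fin N)
    (hl : |x l - y l| = ⨆ i, |x i - y i|)
    (hlleast : ∀ i, |x i - y i| = (⨆ j, |x j - y j|) → l ≤ i)
    (hζ : (⨆ i : {i : Fin N // i ≠ l}, |x i.1 - y i.1|) < max (x l) (y l) / 2)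
    (hmax : max (x l) (y l) / 2 < ⨆ i, |x i - y i|) :
    bottleneck x y = max (x l) (y l) / 2 := by
  classical
  have hNpos : 0 < N := by omega
  have hne : Nonempty (Fin N ⊕ Fin N) := ⟨Sum.inl ⟨0, hNpos⟩⟩
  have hfin : ∀ (f : Fin N → Option (Fin N)), BddAbove (Set.range (diagPenalty x y f)) :=
    fun f => (Set.finite_range _).bddAbove
  have hpen_nonneg : ∀ (f : Fin N → Option (Fin N)) k, 0 ≤ diagPenalty x y f k := by
    intro f k
    rcases k with i | j
    · rcases hfi : f i with _ | j
      · simp [diagPenalty, hfi]; linarith [hxpos i]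
      · simp [diagPenalty, hfi, abs_nonneg]
    · by_cases h : ∃ i, f i = some j
      · simp [diagPenalty, h]
      · simp [diagPenalty, h]; linarith [hypos j]
  have hmc_nonneg : ∀ (f : Fin N → Option (Fin N)), 0 ≤ matchCost x y f := by
    intro f
    exact le_trans (hpen_nonneg f (Sum.inl ⟨0, hNpos⟩))
      (le_ciSup (hfin f) (Sum.inl ⟨0, hNpos⟩))
  have hMpos : 0 < max (x l) (y l) := lt_max_of_lt_left (hxpos l)
  have hzl : max (x l) (y l) / 2 < |x l - y l| := by rw [hl]; exact hmax
  -- upper bound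
  have hub : bottleneck x y ≤ max (x l) (y l) / 2 := by
    set f0 : Fin N → Option (Fin N) := fun i => if i = l then none else some i with hf0def
    have hf0 : IsPartialMatching f0 := by
      intro i i' j hi hi'
      simp only [hf0def] at hi hi'
      split_ifs at hi hi' <;> simp_all
    refine ciInf_le_of_le ⟨0, ?_⟩ ⟨f0, hf0⟩ ?_
    · rintro r ⟨g, rfl⟩; exact hmc_nonneg g.1
    · refine ciSup_le ?_
      rintro (i | j)
      · by_cases hi : i = l
        · have heq : diagPenalty x y f0 (Sum.inl i) = x l / 2 := by
            simp [diagPenalty, hf0def, hi]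
          rw [heq]
          have : x l ≤ max (x l) (y l) := le_max_left _ _
          linarith
        · have heq : diagPenalty x y f0 (Sum.inl i) = |x i - y i| := by
            simp [diagPenalty, hf0def, hi]
          rw [heq]
          refine le_of_lt (lt_of_le_of_lt ?_ hζ)
          exact le_ciSup (f := fun i : {i : Fin N // i ≠ l} => |x i.1 - y i.1|)
            ((Set.finite_range _).bddAbove) ⟨i, hi⟩
      · by_cases hj : j = l
        · have hno : ¬ ∃ i, f0 i = some j := by
            rintro ⟨i, hi⟩
            by_cases h : i = l
            · simp [hf0def, h] at hi
            · simp [hf0def, h] at hi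
              exact h (by rw [hi, hj])
          have heq : diagPenalty x y f0 (Sum.inr j) = y j / 2 := by
            simp only [diagPenalty, if_neg hno]
          rw [heq, hj]
          have : y l ≤ max (x l) (y l) := le_max_right _ _
          linarith
        · have hyes : ∃ i, f0 i = some j := ⟨j, by simp [hf0def, hj]⟩
          simp only [diagPenalty, if_pos hyes]
          linarith
  -- lower bound
  have hlb : max (x l) (y l) / 2 ≤ bottleneck x y := by
    have : Nonempty {f : Fin N → Option (Fin N) // IsPartialMatching f} :=
      ⟨⟨fun _ => none, fun i i' j h _ => by simp at h⟩⟩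
    refine le_ciInf ?_
    rintro ⟨f, hf⟩
    by_contra hcon
    push_neg at hcon
    have hpen : ∀ k, diagPenalty x y f k < max (x l) (y l) / 2 :=
      fun k => lt_of_le_of_lt (le_ciSup (hfin f) k) hcon
    rcases le_total (y l) (x l) with hcase | hcase
    · -- M = x l, y l < x l / 2
      have hM : max (x l) (y l) = x l := max_eq_left hcase
      rw [hM] at hpen hzl
      have hyl : y l < x l / 2 := by
        rw [abs_of_nonneg (by linarith)] at hzl; linarith
      -- every i ≤ l is matched to some j < l
      have key : ∀ i : Fin N, i ≤ l → ∃ j : Fin N, f i = some j ∧ j < l := by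
        intro i hi
        have hxi : x l ≤ x i := hx hi
        have := hpen (Sum.inl i)
        rcases hfi : f i with _ | j
        · rw [show diagPenalty x y f (Sum.inl i) = x i / 2 by simp [diagPenalty, hfi]] at this
          linarith
        · rw [show diagPenalty x y f (Sum.inl i) = |x i - y j| by simp [diagPenalty, hfi]] at this
          refine ⟨j, rfl, ?_⟩
          have habs : x i - y j < x l / 2 := lt_of_le_of_lt (le_abs_self _) this
          have hyj : x l / 2 < y j := by linarith
          by_contra hjl
          push_neg at hjl
          have := hy hjl
          linarith
      have hcard : (Finset.Iic l).card ≤ (Finset.Iio l).card := by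
        refine Finset.card_le_card_of_injOn (fun i => (f i).getD l) ?_ ?_
        · intro i hi
          obtain ⟨j, hj, hjl⟩ := key i (Finset.mem_Iic.mp hi)
          simp [hj, Finset.mem_Iio, hjl]
        · intro i hi i' hi' heq
          obtain ⟨j, hj, _⟩ := key i (Finset.mem_Iic.mp hi)
          obtain ⟨j', hj', _⟩ := key i' (Finset.mem_Iic.mp hi')
          simp only [hj, hj', Option.getD_some] at heq
          exact hf i i' j hj (heq ▸ hj')
      rw [Fin.card_Iic, Fin.card_Iio] at hcard
      omega
    · -- M = y l, x l < y l / 2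
      have hM : max (x l) (y l) = y l := max_eq_right hcase
      rw [hM] at hpen hzl
      have hxl : x l < y l / 2 := by
        rw [abs_of_nonpos (by linarith)] at hzl; linarith
      have key : ∀ j : Fin N, j ≤ l → ∃ i : Fin N, f i = some j ∧ i < l := by
        intro j hj
        have hyj : y l ≤ y j := hy hj
        have hpj := hpen (Sum.inr j)
        have hex : ∃ i, f i = some j := by
          by_contra hno
          rw [show diagPenalty x y f (Sum.inr j) = y j / 2 by simp [diagPenalty, hno]] at hpj
          linarith
        obtain ⟨i, hi⟩ := hex
        refine ⟨i, hi, ?_⟩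
        have hpi := hpen (Sum.inl i)
        rw [show diagPenalty x y f (Sum.inl i) = |x i - y j| by simp [diagPenalty, hi]] at hpi
        have habs : y j - x i < y l / 2 := lt_of_le_of_lt (le_abs_self _) (by rwa [abs_sub_comm] at hpi)
        have hxi : y l / 2 < x i := by linarith
        by_contra hil
        push_neg at hil
        have := hx hil
        linarith
      have hcard : (Finset.Iic l).card ≤ (Finset.Iio l).card := by
        refine Finset.card_le_card_of_injOn
          (fun j => if h : ∃ i, f i = some j then h.choose else l) ?_ ?_
        · intro j hj
          obtain ⟨i, hi, hil⟩ := key j (Finset.mem_Iic.mp hj)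
          have hex : ∃ i, f i = some j := ⟨i, hi⟩
          have hch : f hex.choose = some j := hex.choose_spec
          have : hex.choose = i := hf _ _ j hch hi
          simp [dif_pos hex, this, Finset.mem_Iio, hil]
        · intro j hj j' hj' heq
          obtain ⟨i, hi, _⟩ := key j (Finset.mem_Iic.mp hj)
          obtain ⟨i', hi', _⟩ := key j' (Finset.mem_Iic.mp hj')
          have hex : ∃ i, f i = some j := ⟨i, hi⟩
          have hex' : ∃ i, f i = some j' := ⟨i', hi'⟩
          simp only [dif_pos hex, dif_pos hex'] at heq
          have h1 : f hex.choose = some j := hex.choose_spec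
          have h2 : f hex'.choose = some j' := hex'.choose_spec
          rw [heq, h2] at h1
          exact (Option.some_injective _ h1).symm
      rw [Fin.card_Iic, Fin.card_Iio] at hcard
      omega
  linarith
end

section
/- Let X = (x_1 ≥ … ≥ x_N) and Y = (y_1 ≥ … ≥ y_N) be 0-dimensional persistence diagrams with the same number N ≥ 2 of points. If ζ ≥ max(x_l, y_l)/2 and every index m with z_m ≥ max(x_l, y_l)/2 satisfies m ≥ l, then d_B(X,Y) = max(x_l, y_l)/2. -/
/-- (Lemma 2, case 3.) For diagrams with the same number
`N ≥ 2` of points, if `ζ ≥ max (x l) (y l) / 2` and every index `m` with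
`z m ≥ max (x l) (y l) / 2` satisfies `m ≥ l`, then
`d_B(X,Y) = max (x l) (y l) / 2`. -/
theorem lumawig_lemma2_case3 {N : ℕ} (hN : 2 ≤ N)
    (x y : Fin N → ℝ)
    (hx : Antitone x) (hy : Antitone y)
    (hxpos : ∀ i, 0 < x i) (hypos : ∀ i, 0 < y i)
    (l : Fin N)
    (hl : |x l - y l| = ⨆ i, |x i - y i|)
    (hlleast : ∀ i, |x i - y i| = (⨆ j, |x j - y j|) → l ≤ i)
    (hζ : max (x l) (y l) / 2 ≤ ⨆ i : {i : Fin N // i ≠ l}, |x i.1 - y i.1|)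
    (hm : ∀ m : Fin N, max (x l) (y l) / 2 ≤ |x m - y m| → l ≤ m) :
    bottleneck x y = max (x l) (y l) / 2 := by
  classical
  set c := max (x l) (y l) / 2 with hc
  have hcpos : 0 < c := by
    have h1 := hxpos l
    rw [hc]
    have : 0 < max (x l) (y l) := lt_of_lt_of_le h1 (le_max_left _ _)
    linarith
  haveI : Nontrivial (Fin N) := Fin.nontrivial_iff_two_le.mpr hN
  have hbddz : BddAbove (Set.range fun i : Fin N => |x i - y i|) :=
    (Set.finite_range _).bddAbove
  have hzl : c ≤ |x l - y l| := by
    refine hζ.trans ?_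
    obtain ⟨i0, hi0⟩ := exists_ne l
    haveI : Nonempty {i : Fin N // i ≠ l} := ⟨⟨i0, hi0⟩⟩
    rw [hl]
    exact ciSup_le fun i => le_ciSup hbddz i.1
  have hpen_nonneg : ∀ (f : Fin N → Option (Fin N)) k, 0 ≤ diagPenalty x y f k := by
    intro f k
    rcases k with i | j
    · cases hfi : f i with
      | none =>
        have := hxpos i
        simp only [diagPenalty, hfi, Option.elim]
        linarith
      | some j => simp [diagPenalty, hfi, abs_nonneg]
    · by_cases h : ∃ i, f i = some j
      · simp [diagPenalty, h]
      · have := hypos j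
        simp only [diagPenalty, if_neg h]
        linarith
  have hcost_nonneg : ∀ f : {f : Fin N → Option (Fin N) // IsPartialMatching f},
      0 ≤ matchCost x y f.1 := fun f =>
    (hpen_nonneg f.1 (Sum.inl l)).trans (le_ciSup (Set.finite_range _).bddAbove (Sum.inl l))
  haveI : Nonempty {f : Fin N → Option (Fin N) // IsPartialMatching f} :=
    ⟨⟨fun _ => none, fun i i' j h _ => by simp at h⟩⟩
  apply le_antisymm
  · -- upper bound
    set f : Fin N → Option (Fin N) := fun i => if i < l then some i else none with hfdef
    have hf : IsPartialMatching f := by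
      intro i i' j hi hi'
      simp only [f] at hi hi'
      split_ifs at hi hi' <;> simp_all
    refine le_trans (ciInf_le ⟨0, fun r hr => ?_⟩ ⟨f, hf⟩) ?_
    · obtain ⟨g, rfl⟩ := hr; exact hcost_nonneg g
    · refine ciSup_le fun k => ?_
      rcases k with i | j
      · by_cases hil : i < l
        · have hfi : f i = some i := if_pos hil
          simp only [diagPenalty, hfi, Option.elim]
          by_contra h
          push_neg at h
          exact absurd (hm i h.le) (not_le.mpr hil)
        · have hfi : f i = none := if_neg hil
          simp only [diagPenalty, hfi, Option.elim]
          have h1 : x i ≤ x l := hx (not_lt.mp hil)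
          have h2 : x l ≤ max (x l) (y l) := le_max_left _ _
          rw [hc]
          linarith
      · by_cases hj : ∃ i, f i = some j
        · simp only [diagPenalty, if_pos hj]
          exact hcpos.le
        · simp only [diagPenalty, if_neg hj]
          have hlj : l ≤ j := by
            by_contra h
            exact hj ⟨j, if_pos (not_le.mp h)⟩
          have h1 : y j ≤ y l := hy hlj
          have h2 : y l ≤ max (x l) (y l) := le_max_right _ _
          rw [hc]
          linarith
  · -- lower bound
    refine le_ciInf fun g => ?_
    obtain ⟨f, hf⟩ := g
    by_contra hcon
    push_neg at hcon
    have hpen : ∀ k, diagPenalty x y f k < c := fun k =>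
      lt_of_le_of_lt (le_ciSup (Set.finite_range _).bddAbove k) hcon
    rcases le_or_gt (y l) (x l) with hxy | hxy
    · -- c = x l / 2
      have hcx : c = x l / 2 := by rw [hc, max_eq_left hxy]
      have hzl' : c ≤ x l - y l := by
        rwa [abs_of_nonneg (sub_nonneg.mpr hxy)] at hzl
      have key : ∀ i : Fin N, i ≤ l → ∃ j, f i = some j ∧ j < l := by
        intro i hil
        have hxi : x l ≤ x i := hx hil
        have hp := hpen (Sum.inl i)
        cases hfi : f i with
        | none =>
          rw [show diagPenalty x y f (Sum.inl i) = x i / 2 by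
            simp [diagPenalty, hfi]] at hp
          linarith
        | some j =>
          refine ⟨j, rfl, ?_⟩
          rw [show diagPenalty x y f (Sum.inl i) = |x i - y j| by
            simp [diagPenalty, hfi]] at hp
          have habs := abs_lt.mp hp
          by_contra h
          have : y j ≤ y l := hy (not_lt.mp h)
          linarith [habs.2]
      set g : Fin N → Fin N := fun i => (f i).getD l with hg
      have hmem : ∀ i ∈ Finset.Iic l, g i ∈ Finset.Iio l := by
        intro i hi
        obtain ⟨j, hj, hjl⟩ := key i (Finset.mem_Iic.mp hi)
        simpa [hg, hj] using Finset.mem_Iio.mpr hjl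
      have hinj : Set.InjOn g (Finset.Iic l) := by
        intro a ha b hb hab
        obtain ⟨j, hj, _⟩ := key a (Finset.mem_Iic.mp ha)
        obtain ⟨j', hj', _⟩ := key b (Finset.mem_Iic.mp hb)
        have hjj : j = j' := by simpa [hg, hj, hj'] using hab
        exact hf a b j hj (hjj ▸ hj')
      have hcard := Finset.card_le_card_of_injOn g hmem hinj
      rw [Fin.card_Iic, Fin.card_Iio] at hcard
      omega
    · -- c = y l / 2
      have hcy : c = y l / 2 := by rw [hc, max_eq_right hxy.le]
      have hzl' : c ≤ y l - x l := by
        rw [abs_of_neg (sub_neg.mpr hxy)] at hzl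
        linarith
      have key : ∀ j : Fin N, j ≤ l → ∃ i, f i = some j ∧ i < l := by
        intro j hjl
        have hyj : y l ≤ y j := hy hjl
        have hp := hpen (Sum.inr j)
        by_cases hex : ∃ i, f i = some j
        · obtain ⟨i, hi⟩ := hex
          refine ⟨i, hi, ?_⟩
          have hpi := hpen (Sum.inl i)
          rw [show diagPenalty x y f (Sum.inl i) = |x i - y j| by
            simp [diagPenalty, hi]] at hpi
          have habs := abs_lt.mp hpi
          by_contra h
          have : x i ≤ x l := hx (not_lt.mp h)
          linarith [habs.1]
        · rw [show diagPenalty x y f (Sum.inr j) = y j / 2 by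
            simp [diagPenalty, hex]] at hp
          linarith
      set g : Fin N → Fin N := fun j =>
        if h : ∃ i, f i = some j then h.choose else l with hg
      have hgspec : ∀ j : Fin N, j ≤ l → f (g j) = some j ∧ g j < l := by
        intro j hjl
        obtain ⟨i, hi, hil⟩ := key j hjl
        have hex : ∃ i, f i = some j := ⟨i, hi⟩
        have hspec : f hex.choose = some j := hex.choose_spec
        have hgi : g j = hex.choose := by simp [hg, hex]
        have : g j = i := hgi ▸ hf _ _ _ hspec hi
        exact ⟨by rw [this]; exact hi, by rw [this]; exact hil⟩
      have hmem : ∀ j ∈ Finset.Iic l, g j ∈ Finset.Iio l := by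
        intro j hj
        exact Finset.mem_Iio.mpr (hgspec j (Finset.mem_Iic.mp hj)).2
      have hinj : Set.InjOn g (Finset.Iic l) := by
        intro a ha b hb hab
        have h1 := (hgspec a (Finset.mem_Iic.mp ha)).1
        have h2 := (hgspec b (Finset.mem_Iic.mp hb)).1
        rw [hab, h2] at h1
        exact (Option.some.inj h1).symm
      have hcard := Finset.card_le_card_of_injOn g hmem hinj
      rw [Fin.card_Iic, Fin.card_Iio] at hcard
      omega
end

section
/- Let X = (x_1 ≥ … ≥ x_N) and Y = (y_1 ≥ … ≥ y_N) be 0-dimensional persistence diagrams with the same number N ≥ 2 of points. Suppose max(x_l, y_l)/2 < max(Z), ζ ≥ max(x_l, y_l)/2, and there exists m < l with z_m ≥ max(x_l, y_l)/2. Then the partial matching τ that matches x_j to y_j for all j < l and sends x_j and y_j to the diagonal for all j ≥ l has cost equal to max( max_{j < l} z_j , max(x_l, y_l)/2 ), and this cost is strictly less than max(Z), the cost of the rank-ordered matching φ that matches x_i to y_i for every i. -/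
/-- (Lemma 2, case 4.) For diagrams with the same number
`N ≥ 2` of points, if `max (x l) (y l) / 2 < max Z`, `ζ ≥ max (x l) (y l) / 2`,
and some `m < l` has `z m ≥ max (x l) (y l) / 2`, then the matching `τ`
(matching `x j` to `y j` for `j < l`, and sending `x j`, `y j` to the diagonal
for `j ≥ l`) has cost `max (max_{j < l} z j) (max (x l) (y l) / 2)`, which is
strictly less than `max Z`, the cost of the rank-ordered matching `φ`. -/
theorem lumawig_lemma2_case4 {N : ℕ} (hN : 2 ≤ N)
    (x y : Fin N → ℝ)
    (hx : Antitone x) (hy : Antitone y)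
    (hxpos : ∀ i, 0 < x i) (hypos : ∀ i, 0 < y i)
    (l : Fin N)
    (hl : |x l - y l| = ⨆ i, |x i - y i|)
    (hlleast : ∀ i, |x i - y i| = (⨆ j, |x j - y j|) → l ≤ i)
    (hmax : max (x l) (y l) / 2 < ⨆ i, |x i - y i|)
    (hζ : max (x l) (y l) / 2 ≤ ⨆ i : {i : Fin N // i ≠ l}, |x i.1 - y i.1|)
    (hm : ∃ m : Fin N, m < l ∧ max (x l) (y l) / 2 ≤ |x m - y m|) :
    matchCost x y (fun j => if j < l then some j else none) =
      max (⨆ j : {j : Fin N // j < l}, |x j.1 - y j.1|) (max (x l) (y l) / 2) ∧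
    max (⨆ j : {j : Fin N // j < l}, |x j.1 - y j.1|) (max (x l) (y l) / 2) <
      (⨆ i, |x i - y i|) ∧
    matchCost x y (fun i => some i) = ⨆ i, |x i - y i| := by
  classical
  obtain ⟨m, hml, hmz⟩ := hm
  haveI : Nonempty (Fin N) := ⟨l⟩
  haveI hne : Nonempty {j : Fin N // j < l} := ⟨⟨m, hml⟩⟩
  set S := ⨆ i, |x i - y i| with hSdef
  set A := ⨆ j : {j : Fin N // j < l}, |x j.1 - y j.1| with hAdef
  have bddS : BddAbove (Set.range fun i => |x i - y i|) :=
    Set.Finite.bddAbove (Set.finite_range _)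
  have bddA : BddAbove (Set.range fun j : {j : Fin N // j < l} => |x j.1 - y j.1|) :=
    Set.Finite.bddAbove (Set.finite_range _)
  have hzS : ∀ i, |x i - y i| ≤ S := fun i => le_ciSup bddS i
  have hS0 : (0 : ℝ) ≤ S := le_trans (abs_nonneg _) (hzS l)
  have hM2 : max (x l) (y l) / 2 ≤ max (x l / 2) (y l / 2) := by
    rcases le_total (x l) (y l) with h | h <;> simp [max_def, h] <;>
      split_ifs <;> linarith
  -- Part 3
  have part3 : matchCost x y (fun i => some i) = S := by
    have bddP : BddAbove (Set.range (diagPenalty x y (fun i => some i))) :=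
      Set.Finite.bddAbove (Set.finite_range _)
    apply le_antisymm
    · apply ciSup_le
      rintro (i | j)
      · simpa [diagPenalty] using hzS i
      · have : diagPenalty x y (fun i => some i) (Sum.inr j) = 0 := by
          simp [diagPenalty]
        rw [this]; exact hS0
    · apply ciSup_le
      intro i
      have h1 : diagPenalty x y (fun i => some i) (Sum.inl i) = |x i - y i| := rfl
      calc |x i - y i| = _ := h1.symm
        _ ≤ _ := le_ciSup bddP (Sum.inl i)
  -- the τ matching
  set f : Fin N → Option (Fin N) := fun j => if j < l then some j else none with hfdef
  have bddP : BddAbove (Set.range (diagPenalty x y f)) :=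
    Set.Finite.bddAbove (Set.finite_range _)
  have hinl_lt : ∀ i : Fin N, i < l → diagPenalty x y f (Sum.inl i) = |x i - y i| := by
    intro i hi
    simp only [diagPenalty, hfdef, if_pos hi, Option.elim]
  have hinl_ge : ∀ i : Fin N, ¬ i < l → diagPenalty x y f (Sum.inl i) = x i / 2 := by
    intro i hi
    simp only [diagPenalty, hfdef, if_neg hi, Option.elim]
  have hcond : ∀ j : Fin N, (∃ i, f i = some j) ↔ j < l := by
    intro j
    constructor
    · rintro ⟨i, hi⟩
      by_cases h : i < l
      · rw [hfdef] at hi; simp only [if_pos h] at hi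
        obtain rfl := Option.some.inj hi; exact h
      · rw [hfdef] at hi; simp only [if_neg h] at hi; exact absurd hi (by simp)
    · intro hj; exact ⟨j, by rw [hfdef]; simp [hj]⟩
  have hinr_lt : ∀ j : Fin N, j < l → diagPenalty x y f (Sum.inr j) = 0 := by
    intro j hj
    simp only [diagPenalty]
    rw [if_pos ((hcond j).2 hj)]
  have hinr_ge : ∀ j : Fin N, ¬ j < l → diagPenalty x y f (Sum.inr j) = y j / 2 := by
    intro j hj
    simp only [diagPenalty]
    rw [if_neg (fun h => hj ((hcond j).1 h))]
  -- Part 1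
  have part1 : matchCost x y f = max A (max (x l) (y l) / 2) := by
    apply le_antisymm
    · apply ciSup_le
      rintro (i | j)
      · by_cases hi : i < l
        · rw [hinl_lt i hi]
          exact le_trans (le_ciSup bddA ⟨i, hi⟩) (le_max_left _ _)
        · rw [hinl_ge i hi]
          have hle : x i ≤ x l := hx (not_lt.1 hi)
          have : x i / 2 ≤ max (x l) (y l) / 2 := by
            have := le_max_left (x l) (y l); linarith
          exact le_trans this (le_max_right _ _)
      · by_cases hj : j < l
        · rw [hinr_lt j hj]
          have : (0:ℝ) ≤ max (x l) (y l) / 2 := by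
            have := (hxpos l).le; have := le_max_left (x l) (y l); linarith
          exact le_trans this (le_max_right _ _)
        · rw [hinr_ge j hj]
          have hle : y j ≤ y l := hy (not_lt.1 hj)
          have : y j / 2 ≤ max (x l) (y l) / 2 := by
            have := le_max_right (x l) (y l); linarith
          exact le_trans this (le_max_right _ _)
    · apply max_le
      · apply ciSup_le
        rintro ⟨j, hj⟩
        calc |x j - y j| = diagPenalty x y f (Sum.inl j) := (hinl_lt j hj).symm
          _ ≤ _ := le_ciSup bddP (Sum.inl j)
      · refine le_trans hM2 (max_le ?_ ?_)
        · calc x l / 2 = diagPenalty x y f (Sum.inl l) := (hinl_ge l (lt_irrefl l)).symm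
            _ ≤ _ := le_ciSup bddP (Sum.inl l)
        · calc y l / 2 = diagPenalty x y f (Sum.inr l) := (hinr_ge l (lt_irrefl l)).symm
            _ ≤ _ := le_ciSup bddP (Sum.inr l)
  -- Part 2
  have hAS : A < S := by
    obtain ⟨j0, hj0⟩ := Finite.exists_max (fun j : {j : Fin N // j < l} => |x j.1 - y j.1|)
    have hAle : A ≤ |x j0.1 - y j0.1| := ciSup_le hj0
    have hne' : |x j0.1 - y j0.1| ≠ S := by
      intro h
      exact absurd (hlleast j0.1 h) (not_le.2 j0.2)
    exact lt_of_le_of_lt hAle (lt_of_le_of_ne (hzS j0.1) hne')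
  exact ⟨part1, max_lt hAS hmax, part3⟩
end

section
/- Let X = (x_1 ≥ … ≥ x_N) and Y = (y_1 ≥ … ≥ y_N) be 0-dimensional persistence diagrams with the same number of points. Then every partial matching between X and Y has cost at least min( max(Z), max(x_l, y_l)/2 ); in particular d_B(X,Y) ≥ min( max(Z), max(x_l, y_l)/2 ). -/
/-- For diagrams with the same number of points, every
partial matching has cost at least `min (max Z) (max (x l) (y l) / 2)`;
in particular `d_B(X,Y) ≥ min (max Z) (max (x l) (y l) / 2)`. -/
theorem lumawig_lower_bound_equal {N : ℕ} (hN : 1 ≤ N)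
    (x y : Fin N → ℝ)
    (hx : Antitone x) (hy : Antitone y)
    (hxpos : ∀ i, 0 < x i) (hypos : ∀ i, 0 < y i)
    (l : Fin N)
    (hl : |x l - y l| = ⨆ i, |x i - y i|)
    (hlleast : ∀ i, |x i - y i| = (⨆ j, |x j - y j|) → l ≤ i) :
    (∀ f : Fin N → Option (Fin N), IsPartialMatching f →
      min (⨆ i, |x i - y i|) (max (x l) (y l) / 2) ≤ matchCost x y f) ∧
    min (⨆ i, |x i - y i|) (max (x l) (y l) / 2) ≤ bottleneck x y := by
  classical
  have hfin : ∀ f : Fin N → Option (Fin N), ∀ k, diagPenalty x y f k ≤ matchCost x y f :=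
    fun f k => le_ciSup (Set.finite_range _).bddAbove k
  have key : ∀ f : Fin N → Option (Fin N), IsPartialMatching f →
      min (⨆ i, |x i - y i|) (max (x l) (y l) / 2) ≤ matchCost x y f := by
    intro f hf
    by_cases hc : max (x l) (y l) / 2 ≤ matchCost x y f
    · exact le_trans (min_le_right _ _) hc
    push_neg at hc
    suffices h : |x l - y l| ≤ matchCost x y f by
      rw [hl] at h; exact le_trans (min_le_left _ _) h
    rcases le_total (y l) (x l) with hxy | hxy
    · -- case x l ≥ y l
      have hc' : matchCost x y f < x l / 2 := by
        rwa [max_eq_left hxy] at hc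
      have hmatch : ∀ i : Fin N, i ≤ l → ∃ j, f i = some j := by
        intro i hi
        cases hfi : f i with
        | some j => exact ⟨j, rfl⟩
        | none =>
          exfalso
          have hp := hfin f (Sum.inl i)
          simp only [diagPenalty, hfi, Option.elim] at hp
          have hxi : x l ≤ x i := hx hi
          linarith
      choose g hg using hmatch
      set G : Fin N → Fin N := fun i => if h : i ≤ l then g i h else l with hG
      have hGf : ∀ i ∈ Finset.Iic l, f i = some (G i) := by
        intro i hi
        have hi' := Finset.mem_Iic.1 hi
        simp only [hG, dif_pos hi']
        exact hg i hi'
      have hex : ∃ i ∈ Finset.Iic l, l ≤ G i := by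
        by_contra hcon
        push_neg at hcon
        have hcard := Finset.card_le_card_of_injOn G
          (fun a ha => Finset.mem_Iio.2 (hcon a ha))
          (by
            intro a ha b hb hab
            have h1 := hGf a ha
            have h2 := hGf b hb
            rw [hab] at h1
            exact hf a b _ h1 h2)
        simp [Fin.card_Iic, Fin.card_Iio] at hcard
      obtain ⟨i, hi, hgi⟩ := hex
      have hp := hfin f (Sum.inl i)
      simp only [diagPenalty, hGf i hi, Option.elim] at hp
      have h1 : x l ≤ x i := hx (Finset.mem_Iic.1 hi)
      have h2 : y (G i) ≤ y l := hy hgi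
      calc |x l - y l| = x l - y l := abs_of_nonneg (by linarith)
        _ ≤ x i - y (G i) := by linarith
        _ ≤ |x i - y (G i)| := le_abs_self _
        _ ≤ matchCost x y f := hp
    · -- case y l ≥ x l
      have hc' : matchCost x y f < y l / 2 := by
        rwa [max_eq_right hxy] at hc
      have hmatch : ∀ j : Fin N, j ≤ l → ∃ i, f i = some j := by
        intro j hj
        by_contra hcon
        have hp := hfin f (Sum.inr j)
        simp only [diagPenalty, if_neg hcon] at hp
        have hyj : y l ≤ y j := hy hj
        linarith
      choose g hg using hmatch
      set G : Fin N → Fin N := fun j => if h : j ≤ l then g j h else l with hG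
      have hGf : ∀ j ∈ Finset.Iic l, f (G j) = some j := by
        intro j hj
        have hj' := Finset.mem_Iic.1 hj
        simp only [hG, dif_pos hj']
        exact hg j hj'
      have hex : ∃ j ∈ Finset.Iic l, l ≤ G j := by
        by_contra hcon
        push_neg at hcon
        have hcard := Finset.card_le_card_of_injOn G
          (fun a ha => Finset.mem_Iio.2 (hcon a ha))
          (by
            intro a ha b hb hab
            have h1 := hGf a ha
            have h2 := hGf b hb
            rw [hab, h2] at h1
            exact Option.some_injective _ h1.symm)
        simp [Fin.card_Iic, Fin.card_Iio] at hcard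
      obtain ⟨j, hj, hgj⟩ := hex
      have hp := hfin f (Sum.inl (G j))
      simp only [diagPenalty, hGf j hj, Option.elim] at hp
      have h1 : y l ≤ y j := hy (Finset.mem_Iic.1 hj)
      have h2 : x (G j) ≤ x l := hx hgj
      calc |x l - y l| = y l - x l := by rw [abs_sub_comm]; exact abs_of_nonneg (by linarith)
        _ ≤ y j - x (G j) := by linarith
        _ ≤ |x (G j) - y j| := by rw [abs_sub_comm]; exact le_abs_self _
        _ ≤ matchCost x y f := hp
  refine ⟨key, ?_⟩
  have : Nonempty {f : Fin N → Option (Fin N) // IsPartialMatching f} :=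
    ⟨⟨fun _ => none, by intro i i' j h; simp at h⟩⟩
  exact le_ciInf fun f => key f.1 f.2
end

section
/- Let x_1 ≥ x_2 ≥ … ≥ x_n and y_1 ≥ y_2 ≥ … ≥ y_n be two non-increasing finite sequences of real numbers. Then for every permutation σ of {1,…,n}, max_{1 ≤ i ≤ n} |x_i − y_i| ≤ max_{1 ≤ i ≤ n} |x_i − y_{σ(i)}|; that is, among all bijections matching the two sequences point-to-point, matching by rank order minimizes the maximum absolute difference between matched values. -/
/-- For two non-increasing finite sequences of reals of the
same length, matching by rank order minimizes, over all permutations `σ`, the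
maximum absolute difference between matched values. -/
theorem rank_order_matching_optimal {n : ℕ} (x y : Fin n → ℝ)
    (hx : Antitone x) (hy : Antitone y) (σ : Equiv.Perm (Fin n)) :
    (⨆ i, |x i - y i|) ≤ ⨆ i, |x i - y (σ i)| := by
  rcases Nat.eq_zero_or_pos n with h0 | h0
  · subst h0
    simp [Real.iSup_of_isEmpty]
  · have : Nonempty (Fin n) := ⟨⟨0, h0⟩⟩
    have hBdd : BddAbove (Set.range fun i => |x i - y (σ i)|) :=
      (Set.finite_range _).bddAbove
    refine ciSup_le fun i => ?_
    obtain ⟨j, hj, hσj⟩ : ∃ j, j ≤ i ∧ i ≤ σ j := by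
      by_contra h
      push_neg at h
      have hsub : (Finset.Iic i).image σ ⊆ Finset.Iio i := by
        intro k hk
        simp only [Finset.mem_image, Finset.mem_Iic] at hk
        obtain ⟨a, ha, rfl⟩ := hk
        exact Finset.mem_Iio.mpr (h a ha)
      have hc := Finset.card_le_card hsub
      rw [Finset.card_image_of_injective _ σ.injective, Fin.card_Iic,
        Fin.card_Iio] at hc
      omega
    obtain ⟨k, hk, hσk⟩ : ∃ k, i ≤ k ∧ σ k ≤ i := by
      by_contra h
      push_neg at h
      have hsub : (Finset.Ici i).image σ ⊆ Finset.Ioi i := by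
        intro k hk
        simp only [Finset.mem_image, Finset.mem_Ici] at hk
        obtain ⟨a, ha, rfl⟩ := hk
        exact Finset.mem_Ioi.mpr (h a ha)
      have hc := Finset.card_le_card hsub
      rw [Finset.card_image_of_injective _ σ.injective, Fin.card_Ici,
        Fin.card_Ioi] at hc
      have := i.isLt
      omega
    rcases le_total (y i) (x i) with hle | hle
    · have h1 : x i - y i ≤ x j - y (σ j) := sub_le_sub (hx hj) (hy hσj)
      calc |x i - y i| = x i - y i := abs_of_nonneg (by linarith)
        _ ≤ x j - y (σ j) := h1
        _ ≤ |x j - y (σ j)| := le_abs_self _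
        _ ≤ _ := le_ciSup hBdd j
    · have h1 : y i - x i ≤ y (σ k) - x k := sub_le_sub (hy hσk) (hx hk)
      calc |x i - y i| = y i - x i := abs_sub_comm (x i) (y i) ▸ abs_of_nonneg (by linarith)
        _ ≤ y (σ k) - x k := h1
        _ ≤ |x k - y (σ k)| := (abs_sub_comm (x k) (y (σ k))) ▸ le_abs_self _
        _ ≤ _ := le_ciSup hBdd k
end
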